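/- arXiv:1502.01741 — 4 statements merged into one kernel-verified Lean document; each statement's English description precedes it below -/
import Mathlib

section
/- For any Δ₊, Δ₋ in R^{n-1} and ε ≠ 0, the difference F(Δ₊/ε) - F(Δ₋/(-ε)) equals A · ((Δ₊+Δ₋)/ε), where A is the symmetric matrix A = [ ((s₊+s₋)/2)² Id − dd^T ] / ( s₊ s₋ (s₊+s₋)/2 ), with s₊ = sqrt(1+|Δ₊/ε|²), s₋ = sqrt(1+|Δ₋/ε|²), d = (Δ₊−Δ₋)/(2ε), and F(η) = η/sqrt(1+|η|²). -/
/-- Euclidean norm on `Fin k → ℝ`. -/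
noncomputable def enorm' {k : ℕ} (v : Fin k → ℝ) : ℝ := Real.sqrt (∑ i, v i ^ 2)

theorem stmt3 (m : ℕ) (ε : ℝ) (hε : ε ≠ 0) (Δp Δm : Fin m → ℝ) :
    let F : (Fin m → ℝ) → (Fin m → ℝ) := fun η => (Real.sqrt (1 + enorm' η ^ 2))⁻¹ • η
    let sp := Real.sqrt (1 + enorm' (ε⁻¹ • Δp) ^ 2)
    let sm := Real.sqrt (1 + enorm' ((-ε)⁻¹ • Δm) ^ 2)
    let d : Fin m → ℝ := (2 * ε)⁻¹ • (Δp - Δm)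
    let A : Matrix (Fin m) (Fin m) ℝ :=
      (sp * sm * ((sp + sm) / 2))⁻¹ •
        (((sp + sm) / 2) ^ 2 • (1 : Matrix (Fin m) (Fin m) ℝ) - Matrix.vecMulVec d d)
    F (ε⁻¹ • Δp) - F ((-ε)⁻¹ • Δm) = A.mulVec (ε⁻¹ • (Δp + Δm)) := by
  intro F sp sm d A
  have hen : ∀ w : Fin m → ℝ, enorm' w ^ 2 = ∑ i, w i ^ 2 := fun w =>
    Real.sq_sqrt (Finset.sum_nonneg fun i _ => sq_nonneg _)
  have hsp_pos : 0 < sp := Real.sqrt_pos.2 (by rw [hen]; positivity)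
  have hsm_pos : 0 < sm := Real.sqrt_pos.2 (by rw [hen]; positivity)
  have hsp2 : sp ^ 2 = 1 + ∑ i, (ε⁻¹ * Δp i) ^ 2 := by
    rw [Real.sq_sqrt (by rw [hen]; positivity), hen]; rfl
  have hsm2 : sm ^ 2 = 1 + ∑ i, (ε⁻¹ * Δm i) ^ 2 := by
    rw [Real.sq_sqrt (by rw [hen]; positivity), hen]
    congr 1
    exact Finset.sum_congr rfl fun i _ => by
      show ((-ε)⁻¹ * Δm i) ^ 2 = _ ; ring
  set S : ℝ := ∑ j, d j * (ε⁻¹ * (Δp j + Δm j)) with hSdef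
  have hS : 2 * S = sp ^ 2 - sm ^ 2 := by
    rw [hsp2, hsm2, hSdef, Finset.mul_sum,
      show (1 + ∑ i, (ε⁻¹ * Δp i) ^ 2) - (1 + ∑ i, (ε⁻¹ * Δm i) ^ 2)
        = ∑ i, ((ε⁻¹ * Δp i) ^ 2 - (ε⁻¹ * Δm i) ^ 2) by
          rw [Finset.sum_sub_distrib]; ring]
    refine Finset.sum_congr rfl fun i _ => ?_
    show 2 * ((2 * ε)⁻¹ * (Δp i - Δm i) * (ε⁻¹ * (Δp i + Δm i))) = _
    field_simp; ring
  funext i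
  have hvm : (Matrix.vecMulVec d d).mulVec (ε⁻¹ • (Δp + Δm)) i = d i * S := by
    simp only [Matrix.mulVec, dotProduct, Matrix.vecMulVec_apply, Pi.smul_apply,
      Pi.add_apply, smul_eq_mul, hSdef, Finset.mul_sum]
    exact Finset.sum_congr rfl fun j _ => by ring
  have hmv : A.mulVec (ε⁻¹ • (Δp + Δm)) i
      = (sp * sm * ((sp + sm) / 2))⁻¹ *
        (((sp + sm) / 2) ^ 2 * (ε⁻¹ * (Δp i + Δm i)) - d i * S) := by
    rw [show A.mulVec (ε⁻¹ • (Δp + Δm))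
        = (sp * sm * ((sp + sm) / 2))⁻¹ •
          (((sp + sm) / 2) ^ 2 • (ε⁻¹ • (Δp + Δm))
            - (Matrix.vecMulVec d d).mulVec (ε⁻¹ • (Δp + Δm))) by
      simp only [A, Matrix.smul_mulVec, Matrix.sub_mulVec, Matrix.one_mulVec]]
    simp only [Pi.smul_apply, Pi.sub_apply, Pi.add_apply, smul_eq_mul, hvm]
  have hdi : d i = (2 * ε)⁻¹ * (Δp i - Δm i) := rfl
  have hS' : S = (sp ^ 2 - sm ^ 2) / 2 := by linarith
  have h1 : sp ≠ 0 := ne_of_gt hsp_pos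
  have h2 : sm ≠ 0 := ne_of_gt hsm_pos
  have h3 : sp + sm ≠ 0 := ne_of_gt (by linarith)
  show sp⁻¹ * (ε⁻¹ * Δp i) - sm⁻¹ * ((-ε)⁻¹ * Δm i) = _
  rw [hmv, hdi, hS']
  field_simp
  ring
end

section
/- With A the matrix from the difference identity for F, if |Δ₊/ε| <= 1 and |Δ₋/ε| <= 1, then every diagonal entry of A satisfies e_iᵀ A e_i >= 1/(2√2). -/
lemma enorm'_sq {k : ℕ} (v : Fin k → ℝ) : enorm' v ^ 2 = ∑ i, v i ^ 2 := by
  rw [enorm', Real.sq_sqrt]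
  exact Finset.sum_nonneg fun i _ => sq_nonneg _

lemma sq_le_enorm'_sq {k : ℕ} (v : Fin k → ℝ) (i : Fin k) : v i ^ 2 ≤ enorm' v ^ 2 := by
  rw [enorm'_sq]
  exact Finset.single_le_sum (fun j _ => sq_nonneg (v j)) (Finset.mem_univ i)

theorem stmt4 (m : ℕ) (ε : ℝ) (hε : ε ≠ 0) (Δp Δm : Fin m → ℝ) :
    let sp := Real.sqrt (1 + enorm' (ε⁻¹ • Δp) ^ 2)
    let sm := Real.sqrt (1 + enorm' ((-ε)⁻¹ • Δm) ^ 2)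
    let d : Fin m → ℝ := (2 * ε)⁻¹ • (Δp - Δm)
    let A : Matrix (Fin m) (Fin m) ℝ :=
      (sp * sm * ((sp + sm) / 2))⁻¹ •
        (((sp + sm) / 2) ^ 2 • (1 : Matrix (Fin m) (Fin m) ℝ) - Matrix.vecMulVec d d)
    enorm' (ε⁻¹ • Δp) ≤ 1 → enorm' ((-ε)⁻¹ • Δm) ≤ 1 →
      ∀ i : Fin m, A i i ≥ 1 / (2 * Real.sqrt 2) := by
  intro sp sm d A ha hb i
  set x : Fin m → ℝ := ε⁻¹ • Δp with hxdef
  set y : Fin m → ℝ := (-ε)⁻¹ • Δm with hydef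
  have ha0 : 0 ≤ enorm' x := Real.sqrt_nonneg _
  have hb0 : 0 ≤ enorm' y := Real.sqrt_nonneg _
  -- bounds on sp, sm
  have hsp1 : 1 ≤ sp := by
    rw [show (1:ℝ) = Real.sqrt 1 by simp]
    exact Real.sqrt_le_sqrt (by nlinarith [sq_nonneg (enorm' x)])
  have hsm1 : 1 ≤ sm := by
    rw [show (1:ℝ) = Real.sqrt 1 by simp]
    exact Real.sqrt_le_sqrt (by nlinarith [sq_nonneg (enorm' y)])
  have hsp2 : sp ≤ Real.sqrt 2 := Real.sqrt_le_sqrt (by nlinarith)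
  have hsm2 : sm ≤ Real.sqrt 2 := Real.sqrt_le_sqrt (by nlinarith)
  have h2 : (Real.sqrt 2) ^ 2 = 2 := Real.sq_sqrt (by norm_num)
  have h21 : (1:ℝ) ≤ Real.sqrt 2 := by nlinarith [Real.sqrt_nonneg 2]
  -- d i in terms of x i, y i
  have hd : d i = (x i + y i) / 2 := by
    simp only [hxdef, hydef, d, Pi.smul_apply, Pi.sub_apply, smul_eq_mul, inv_neg, mul_inv]
    field_simp
    ring
  set u := x i with hu
  set v := y i with hv
  -- sp ≥ sqrt(1+u²), sm ≥ sqrt(1+v²)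
  have hspu : Real.sqrt (1 + u ^ 2) ≤ sp :=
    Real.sqrt_le_sqrt (by have := sq_le_enorm'_sq x i; linarith)
  have hsmv : Real.sqrt (1 + v ^ 2) ≤ sm :=
    Real.sqrt_le_sqrt (by have := sq_le_enorm'_sq y i; linarith)
  have hsu := Real.sq_sqrt (show (0:ℝ) ≤ 1 + u ^ 2 by positivity)
  have hsv := Real.sq_sqrt (show (0:ℝ) ≤ 1 + v ^ 2 by positivity)
  have hsu0 : 0 ≤ Real.sqrt (1 + u ^ 2) := Real.sqrt_nonneg _
  have hsv0 : 0 ≤ Real.sqrt (1 + v ^ 2) := Real.sqrt_nonneg _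
  -- Cauchy: 1+uv ≤ sqrt(1+u²) sqrt(1+v²)
  have hcs : 1 + u * v ≤ Real.sqrt (1 + u ^ 2) * Real.sqrt (1 + v ^ 2) := by
    rw [← Real.sqrt_mul (by positivity)]
    have h1 : (1 + u * v) ^ 2 ≤ (1 + u ^ 2) * (1 + v ^ 2) := by nlinarith [sq_nonneg (u - v)]
    calc 1 + u * v ≤ |1 + u * v| := le_abs_self _
      _ = Real.sqrt ((1 + u * v) ^ 2) := (Real.sqrt_sq_eq_abs _).symm
      _ ≤ _ := Real.sqrt_le_sqrt h1
  -- key: ((sp+sm)/2)² − d i ² ≥ 1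
  have hkey : 1 ≤ ((sp + sm) / 2) ^ 2 - d i * d i := by
    rw [hd]
    nlinarith [hcs, hspu, hsmv, hsu, hsv, hsu0, hsv0]
  -- denominator bound
  have hsp0 : (0:ℝ) < sp := by linarith
  have hsm0 : (0:ℝ) < sm := by linarith
  have hden0 : 0 < sp * sm * ((sp + sm) / 2) :=
    mul_pos (mul_pos hsp0 hsm0) (by linarith)
  have hden : sp * sm * ((sp + sm) / 2) ≤ 2 * Real.sqrt 2 := by
    nlinarith [mul_le_mul hsp2 hsm2 (by linarith) (Real.sqrt_nonneg 2)]
  have hAii : A i i = (sp * sm * ((sp + sm) / 2))⁻¹ *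
      (((sp + sm) / 2) ^ 2 * 1 - d i * d i) := by
    simp only [A, Matrix.smul_apply, Matrix.sub_apply, Matrix.one_apply_eq,
      Matrix.vecMulVec_apply, smul_eq_mul]
  rw [hAii, ge_iff_le, mul_one]
  have h2s : (0:ℝ) < 2 * Real.sqrt 2 := by positivity
  calc 1 / (2 * Real.sqrt 2) = (2 * Real.sqrt 2)⁻¹ * 1 := by ring
    _ ≤ (sp * sm * ((sp + sm) / 2))⁻¹ * (((sp + sm) / 2) ^ 2 - d i * d i) := by
        apply mul_le_mul ((inv_anti₀ hden0 hden)) hkey zero_le_one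
        exact inv_nonneg.mpr hden0.le
end

section
/- Let (Y_j)_{j=-M}^{M} be a sequence in R^{n-1} with Y_{-M} = Y_M = 0, and set Δ_j = Y_{j+1} − Y_j. If for every interior index j (|j| < M) and every coordinate i one has |e_i · (Δ_j − Δ_{j-1})| <= 2N ε², where ε = ℓ/M, then for all j one has |Δ_j/ε| <= 4Nℓ √(n-1). In particular, if ℓ <= 1/(4N√(n-1)) then |Δ_j/ε| <= 1 for all j. -/
lemma lip_aux (c : ℝ) (h : ℕ → ℝ) (n : ℕ)
    (hstep : ∀ k, k + 1 < n → |h (k+1) - h k| ≤ c) :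
    ∀ d a, a + d < n → |h (a+d) - h a| ≤ c * d := by
  intro d
  induction d with
  | zero => intro a _; simp
  | succ d ih =>
    intro a hlt
    have h1 := ih a (by omega)
    have h2 := hstep (a+d) (by omega)
    have : h (a+(d+1)) - h a = (h (a+d+1) - h (a+d)) + (h (a+d) - h a) := by
      have : a + (d+1) = a + d + 1 := by omega
      rw [this]; ring
    rw [this]
    calc |(h (a+d+1) - h (a+d)) + (h (a+d) - h a)|
        ≤ |h (a+d+1) - h (a+d)| + |h (a+d) - h a| := abs_add_le _ _
      _ ≤ c + c * d := add_le_add h2 h1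
      _ = c * (d+1 : ℕ) := by push_cast; ring

lemma bound_aux (c : ℝ) (hc : 0 ≤ c) (n : ℕ) (hn : 0 < n) (h : ℕ → ℝ)
    (hstep : ∀ k, k + 1 < n → |h (k+1) - h k| ≤ c)
    (hsum : ∑ k ∈ Finset.range n, h k = 0) :
    ∀ a, a < n → |h a| ≤ c * n := by
  intro a ha
  have key : ∀ k ∈ Finset.range n, |h a - h k| ≤ c * n := by
    intro k hk
    rw [Finset.mem_range] at hk
    rcases le_total a k with hle | hle
    · obtain ⟨d, rfl⟩ := Nat.exists_eq_add_of_le hle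
      rw [abs_sub_comm]
      calc |h (a+d) - h a| ≤ c * d := lip_aux c h n hstep d a (by omega)
        _ ≤ c * n := by
            have : (d:ℝ) ≤ n := by exact_mod_cast (by omega : d ≤ n)
            exact mul_le_mul_of_nonneg_left this hc
    · obtain ⟨d, rfl⟩ := Nat.exists_eq_add_of_le hle
      calc |h (k+d) - h k| ≤ c * d := lip_aux c h n hstep d k (by omega)
        _ ≤ c * n := by
            have : (d:ℝ) ≤ n := by exact_mod_cast (by omega : d ≤ n)
            exact mul_le_mul_of_nonneg_left this hc
  have hmain : (n : ℝ) * |h a| ≤ n * (c * n) := by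
    have e1 : (n : ℝ) * h a = ∑ k ∈ Finset.range n, (h a - h k) := by
      rw [Finset.sum_sub_distrib, hsum, sub_zero, Finset.sum_const, Finset.card_range,
        nsmul_eq_mul]
    calc (n : ℝ) * |h a| = |(n:ℝ) * h a| := by
          rw [abs_mul, Nat.abs_cast]
      _ = |∑ k ∈ Finset.range n, (h a - h k)| := by rw [e1]
      _ ≤ ∑ k ∈ Finset.range n, |h a - h k| := Finset.abs_sum_le_sum_abs _ _
      _ ≤ ∑ k ∈ Finset.range n, c * n := Finset.sum_le_sum key
      _ = n * (c * n) := by rw [Finset.sum_const, Finset.card_range, nsmul_eq_mul]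
  have hnpos : (0:ℝ) < n := by exact_mod_cast hn
  exact le_of_mul_le_mul_left hmain hnpos

theorem stmt5 (m M : ℕ) (hM : 0 < M) (ℓ N : ℝ) (hℓ : 0 < ℓ) (hN : 0 < N)
    (Y : ℤ → Fin m → ℝ) (hYa : Y (-(M:ℤ)) = 0) (hYb : Y (M:ℤ) = 0) :
    let ε := ℓ / M
    let Δ : ℤ → Fin m → ℝ := fun j => Y (j + 1) - Y j
    (∀ j : ℤ, |j| < (M:ℤ) → ∀ i : Fin m, |(Δ j - Δ (j - 1)) i| ≤ 2 * N * ε ^ 2) →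
      (∀ j : ℤ, -(M:ℤ) ≤ j → j < (M:ℤ) → enorm' (Δ j) / ε ≤ 4 * N * ℓ * Real.sqrt m) ∧
      (ℓ ≤ 1 / (4 * N * Real.sqrt m) →
        ∀ j : ℤ, -(M:ℤ) ≤ j → j < (M:ℤ) → enorm' (Δ j) / ε ≤ 1) := by
  intro ε Δ hyp
  have hMR : (0:ℝ) < M := by exact_mod_cast hM
  have hε : 0 < ε := div_pos hℓ hMR
  have hεM : ε * M = ℓ := div_mul_cancel₀ ℓ (ne_of_gt hMR)
  set c : ℝ := 2 * N * ε ^ 2 with hc_def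
  have hc : 0 ≤ c := by positivity
  -- coordinate-wise bound
  have coord : ∀ j : ℤ, -(M:ℤ) ≤ j → j < (M:ℤ) → ∀ i, |Δ j i| ≤ 4 * N * ε * ℓ := by
    intro j hja hjb i
    set h : ℕ → ℝ := fun k => Δ (-(M:ℤ) + k) i with hh
    have hstep : ∀ k, k + 1 < 2*M → |h (k+1) - h k| ≤ c := by
      intro k hk
      have H := hyp (-(M:ℤ) + k + 1) (by
        have h0 : (0:ℤ) ≤ k := Int.ofNat_nonneg k
        have h1 : (k:ℤ) + 1 < 2*M := by exact_mod_cast hk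
        rw [abs_lt]; omega) i
      have e1 : (-(M:ℤ) + k + 1) = -(M:ℤ) + ((k+1 : ℕ) : ℤ) := by push_cast; ring
      simp only [Pi.sub_apply, e1] at H
      have e2 : ((-(M:ℤ) + ((k+1:ℕ):ℤ)) - 1) = -(M:ℤ) + (k : ℤ) := by push_cast; ring
      rw [e2] at H
      simp only [hh]
      exact H
    have hsum : ∑ k ∈ Finset.range (2*M), h k = 0 := by
      have tel := Finset.sum_range_sub (f := fun k : ℕ => Y (-(M:ℤ) + k) i) (n := 2*M)
      have e3 : ∀ k : ℕ, h k = Y (-(M:ℤ) + (k+1:ℕ)) i - Y (-(M:ℤ) + k) i := by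
        intro k
        simp only [hh, Δ, Pi.sub_apply]
        congr 2
        push_cast; ring
      rw [Finset.sum_congr rfl (fun k _ => e3 k), tel]
      have e4 : (-(M:ℤ) + ((2*M : ℕ) : ℤ)) = (M:ℤ) := by push_cast; ring
      have e5 : (-(M:ℤ) + ((0:ℕ) : ℤ)) = -(M:ℤ) := by push_cast; ring
      rw [e4, e5, hYa, hYb]
      simp
    have hb := bound_aux c hc (2*M) (by omega) h hstep hsum (j + M).toNat (by omega)
    have e6 : (-(M:ℤ) + ((j + M).toNat : ℤ)) = j := by omega
    rw [hh] at hb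
    simp only [e6] at hb
    calc |Δ j i| ≤ c * (2*M : ℕ) := hb
      _ = 4 * N * ε * ℓ := by
          rw [hc_def]
          push_cast
          rw [← hεM]
          ring
  have hB : 0 ≤ 4 * N * ε * ℓ := by positivity
  have part1 : ∀ j : ℤ, -(M:ℤ) ≤ j → j < (M:ℤ) →
      enorm' (Δ j) / ε ≤ 4 * N * ℓ * Real.sqrt m := by
    intro j hja hjb
    have hnorm : enorm' (Δ j) ≤ Real.sqrt m * (4 * N * ε * ℓ) := by
      have hsq : ∑ i, (Δ j i) ^ 2 ≤ (m : ℝ) * (4 * N * ε * ℓ)^2 := by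
        calc ∑ i, (Δ j i) ^ 2 ≤ ∑ _i : Fin m, (4 * N * ε * ℓ)^2 := by
              apply Finset.sum_le_sum
              intro i _
              rw [← sq_abs]
              exact pow_le_pow_left₀ (abs_nonneg _) (coord j hja hjb i) 2
          _ = (m : ℝ) * (4 * N * ε * ℓ)^2 := by
              rw [Finset.sum_const, Finset.card_univ, Fintype.card_fin, nsmul_eq_mul]
      calc enorm' (Δ j) ≤ Real.sqrt ((m : ℝ) * (4 * N * ε * ℓ)^2) :=
            Real.sqrt_le_sqrt hsq
        _ = Real.sqrt m * (4 * N * ε * ℓ) := by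
            rw [Real.sqrt_mul (Nat.cast_nonneg m), Real.sqrt_sq hB]
    rw [div_le_iff₀ hε]
    calc enorm' (Δ j) ≤ Real.sqrt m * (4 * N * ε * ℓ) := hnorm
      _ = 4 * N * ℓ * Real.sqrt m * ε := by ring
  refine ⟨part1, ?_⟩
  intro hℓ' j hja hjb
  rcases Nat.eq_zero_or_pos m with hm | hm
  · have : enorm' (Δ j) = 0 := by
      subst hm
      simp [enorm']
    rw [this, zero_div]
    exact zero_le_one
  · have hsm : (0:ℝ) < Real.sqrt m := Real.sqrt_pos.mpr (by exact_mod_cast hm)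
    calc enorm' (Δ j) / ε ≤ 4 * N * ℓ * Real.sqrt m := part1 j hja hjb
      _ ≤ 4 * N * (1 / (4 * N * Real.sqrt m)) * Real.sqrt m := by
          have h4 : (0:ℝ) < 4 * N := by positivity
          gcongr
      _ = 1 := by field_simp
end

section
/- Let h: Q → R be C^{1,α} on a convex set Q ⊆ R^n with Hölder constant H, i.e., |h(q+v) − h(q) − ∇h(q)·v| <= H|v|^{1+α} for all q, q+v in Q. Then for q, q+(ε,Δ) in Q with |Δ| <= |ε|, the midpoint value satisfies |(e^{h(q)} + e^{h(q+(ε,Δ))})/2 − e^{h(q + (ε,Δ)/2)}| <= C(h) |ε|^{1+α} for a constant C(h) depending only on H, α, and sup e^h, sup|∇h| on Q. -/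
set_option maxHeartbeats 1000000


/-- Euclidean inner product on `Fin k → ℝ`. -/
def dotp {k : ℕ} (a b : Fin k → ℝ) : ℝ := ∑ i, a i * b i

lemma abs_dotp_le {k : ℕ} (a b : Fin k → ℝ) : |dotp a b| ≤ enorm' a * enorm' b := by
  have h := Finset.sum_mul_sq_le_sq_mul_sq Finset.univ a b
  have h2 : |dotp a b| = Real.sqrt ((dotp a b) ^ 2) := (Real.sqrt_sq_eq_abs _).symm
  rw [h2, enorm', enorm', ← Real.sqrt_mul (by positivity)]
  exact Real.sqrt_le_sqrt h

theorem stmt8 (m : ℕ) (α H B₁ B₂ : ℝ) (hα : 0 < α) (hα1 : α ≤ 1) (hH : 0 < H)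
    (hB₁ : 0 < B₁) (hB₂ : 0 < B₂) :
    ∃ C > (0:ℝ), ∀ (Q : Set (Fin (m + 1) → ℝ)), Convex ℝ Q →
      ∀ (h : (Fin (m + 1) → ℝ) → ℝ) (g : (Fin (m + 1) → ℝ) → (Fin (m + 1) → ℝ)),
      (∀ q v : Fin (m + 1) → ℝ, q ∈ Q → q + v ∈ Q →
        |h (q + v) - h q - dotp (g q) v| ≤ H * enorm' v ^ (1 + α)) →
      (∀ q ∈ Q, Real.exp (h q) ≤ B₁) →
      (∀ q ∈ Q, enorm' (g q) ≤ B₂) →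
      ∀ (q : Fin (m + 1) → ℝ) (ε : ℝ) (Δ : Fin m → ℝ),
        q ∈ Q → q + (Fin.cons ε Δ : Fin (m + 1) → ℝ) ∈ Q → enorm' Δ ≤ |ε| →
        |(Real.exp (h q) + Real.exp (h (q + (Fin.cons ε Δ : Fin (m + 1) → ℝ)))) / 2
            - Real.exp (h (q + (1 / 2 : ℝ) • (Fin.cons ε Δ : Fin (m + 1) → ℝ)))|
          ≤ C * |ε| ^ (1 + α) := by
  have hBH : (0:ℝ) < B₂ + H := by linarith
  set δ : ℝ := min 1 (B₂ + H)⁻¹ with hδdef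
  have hδ0 : 0 < δ := lt_min one_pos (inv_pos.2 hBH)
  have hδ1 : δ ≤ 1 := min_le_left _ _
  have hδpow : 0 < δ ^ (1 + α) := Real.rpow_pos_of_pos hδ0 _
  refine ⟨2 * B₁ / δ ^ (1 + α) + B₁ * ((B₂ + H) ^ 2 + H), by positivity, ?_⟩
  intro Q hQ h g hHol hhB₁ hgB₂ q ε Δ hq hqv hΔ
  have hεn : (0:ℝ) ≤ |ε| := abs_nonneg ε
  have h1α : (0:ℝ) ≤ 1 + α := by linarith
  have h1α' : (1:ℝ) + α ≠ 0 := by linarith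
  have hεpow : (0:ℝ) ≤ |ε| ^ (1 + α) := Real.rpow_nonneg hεn _
  set v : Fin (m + 1) → ℝ := Fin.cons ε Δ with hvdef
  set w : Fin (m + 1) → ℝ := (1 / 2 : ℝ) • v with hwdef
  have hp : q + w ∈ Q := by
    have h2 := hQ hq hqv (by norm_num : (0:ℝ) ≤ 1/2) (by norm_num : (0:ℝ) ≤ 1/2)
      (by norm_num : (1:ℝ)/2 + 1/2 = 1)
    convert h2 using 1
    rw [hwdef]; module
  have hpw : (q + w) + w = q + v := by rw [hwdef]; module
  have hpmw : (q + w) + (-w) = q := by rw [hwdef]; module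
  set s : ℝ := dotp (g (q + w)) w with hsdef
  have hdotneg : dotp (g (q + w)) (-w) = -s := by
    rw [hsdef, dotp, dotp, ← Finset.sum_neg_distrib]
    exact Finset.sum_congr rfl fun i _ => by simp
  have henneg : enorm' (-w) = enorm' w := by
    rw [enorm', enorm']
    congr 1
    exact Finset.sum_congr rfl fun i _ => by simp
  have hA := hHol (q + w) (-w) hp (by rw [hpmw]; exact hq)
  rw [hpmw, hdotneg, henneg, sub_neg_eq_add] at hA
  have hB := hHol (q + w) w hp (by rw [hpw]; exact hqv)
  rw [hpw] at hB
  -- norm estimates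
  have hsumΔ : ∑ i, Δ i ^ 2 ≤ ε ^ 2 := by
    have h1 : Real.sqrt (∑ i, Δ i ^ 2) ≤ |ε| := hΔ
    calc ∑ i, Δ i ^ 2 = Real.sqrt (∑ i, Δ i ^ 2) ^ 2 :=
          (Real.sq_sqrt (by positivity)).symm
      _ ≤ |ε| ^ 2 := pow_le_pow_left₀ (Real.sqrt_nonneg _) h1 2
      _ = ε ^ 2 := sq_abs ε
  have hwsum : ∑ i, w i ^ 2 ≤ ε ^ 2 := by
    calc ∑ i, w i ^ 2 = (1/4) * ∑ i, v i ^ 2 := by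
          rw [Finset.mul_sum]
          refine Finset.sum_congr rfl fun i _ => ?_
          rw [hwdef]; simp [smul_eq_mul]; ring
      _ = (1/4) * (ε ^ 2 + ∑ i, Δ i ^ 2) := by
          rw [hvdef]; simp [Fin.sum_univ_succ]
      _ ≤ (1/4) * (ε ^ 2 + ε ^ 2) := by gcongr
      _ ≤ ε ^ 2 := by linarith [sq_nonneg ε]
  have hwle : enorm' w ≤ |ε| := by
    rw [enorm']
    calc Real.sqrt (∑ i, w i ^ 2) ≤ Real.sqrt (ε ^ 2) := Real.sqrt_le_sqrt hwsum
      _ = |ε| := Real.sqrt_sq_eq_abs ε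
  have hwn : 0 ≤ enorm' w := Real.sqrt_nonneg _
  have hs : |s| ≤ B₂ * enorm' w :=
    le_trans (abs_dotp_le _ _) (mul_le_mul_of_nonneg_right (hgB₂ _ hp) hwn)
  have hwpow_le : enorm' w ^ (1 + α) ≤ |ε| ^ (1 + α) := Real.rpow_le_rpow hwn hwle h1α
  rcases le_or_gt |ε| δ with hsmall | hbig
  · -- small increment case
    have hε1 : |ε| ≤ 1 := le_trans hsmall hδ1
    have hw1 : enorm' w ≤ 1 := le_trans hwle hε1
    have hwpow : enorm' w ^ (1 + α) ≤ enorm' w := by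
      calc enorm' w ^ (1 + α) = enorm' w ^ (1:ℝ) * enorm' w ^ α := by
            rw [← Real.rpow_add' hwn h1α']
        _ ≤ enorm' w * 1 := by
            rw [Real.rpow_one]
            exact mul_le_mul_of_nonneg_left (Real.rpow_le_one hwn hw1 hα.le) hwn
        _ = enorm' w := mul_one _
    set a := h q - h (q + w) with hadef
    set b := h (q + v) - h (q + w) with hbdef
    have hA' : |a + s| ≤ H * enorm' w ^ (1 + α) := hA
    have hB' : |b - s| ≤ H * enorm' w ^ (1 + α) := hB
    have hHw : H * enorm' w ^ (1 + α) ≤ H * enorm' w :=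
      mul_le_mul_of_nonneg_left hwpow hH.le
    have haabs : |a| ≤ (B₂ + H) * enorm' w := by
      have h1 : |a| ≤ |a + s| + |s| := by
        have := abs_add_le (a + s) (-s); simpa using this
      linarith
    have hbabs : |b| ≤ (B₂ + H) * enorm' w := by
      have h1 : |b| ≤ |b - s| + |s| := by
        have := abs_add_le (b - s) s; simpa using this
      linarith
    have hwδ : enorm' w ≤ (B₂ + H)⁻¹ := le_trans (le_trans hwle hsmall) (min_le_right _ _)
    have hbd1 : (B₂ + H) * enorm' w ≤ 1 := by
      calc (B₂ + H) * enorm' w ≤ (B₂ + H) * (B₂ + H)⁻¹ :=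
            mul_le_mul_of_nonneg_left hwδ hBH.le
        _ = 1 := mul_inv_cancel₀ hBH.ne'
    have ha1 : |a| ≤ 1 := le_trans haabs hbd1
    have hb1 : |b| ≤ 1 := le_trans hbabs hbd1
    have hea := Real.abs_exp_sub_one_sub_id_le ha1
    have heb := Real.abs_exp_sub_one_sub_id_le hb1
    have habsum : |a + b| ≤ 2 * (H * enorm' w ^ (1 + α)) := by
      have h1 : a + b = (a + s) + (b - s) := by ring
      rw [h1]
      exact le_trans (abs_add_le _ _) (by linarith)
    -- square bound
    have hsqgen : ∀ x : ℝ, |x| ≤ (B₂ + H) * enorm' w → x ^ 2 ≤ (B₂ + H) ^ 2 * |ε| ^ (1 + α) := by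
      intro x hx
      rcases eq_or_lt_of_le hεn with h0 | h0
      · have hw0 : enorm' w = 0 := le_antisymm (h0 ▸ hwle) hwn
        have hx0 : x = 0 := by
          have : |x| ≤ 0 := by rw [hw0] at hx; simpa using hx
          exact abs_eq_zero.1 (le_antisymm this (abs_nonneg x))
        rw [hx0, ← h0, Real.zero_rpow h1α']
        simp
      · have h2 : x ^ 2 ≤ ((B₂ + H) * enorm' w) ^ 2 := by
          calc x ^ 2 = |x| ^ 2 := (sq_abs x).symm
            _ ≤ ((B₂ + H) * enorm' w) ^ 2 := pow_le_pow_left₀ (abs_nonneg x) hx 2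
        have h3 : (enorm' w) ^ 2 ≤ |ε| ^ (1 + α) := by
          have h4 : (enorm' w) ^ 2 ≤ |ε| ^ 2 := pow_le_pow_left₀ hwn hwle 2
          have h5 : |ε| ^ (2:ℕ) = |ε| ^ ((2:ℕ):ℝ) := (Real.rpow_natCast _ _).symm
          have h6 : |ε| ^ ((2:ℕ):ℝ) ≤ |ε| ^ (1 + α) :=
            Real.rpow_le_rpow_of_exponent_ge h0 hε1 (by push_cast; linarith)
          calc (enorm' w) ^ 2 ≤ |ε| ^ 2 := h4
            _ = |ε| ^ ((2:ℕ):ℝ) := h5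
            _ ≤ |ε| ^ (1 + α) := h6
        calc x ^ 2 ≤ ((B₂ + H) * enorm' w) ^ 2 := h2
          _ = (B₂ + H) ^ 2 * (enorm' w) ^ 2 := mul_pow _ _ 2
          _ ≤ (B₂ + H) ^ 2 * |ε| ^ (1 + α) :=
              mul_le_mul_of_nonneg_left h3 (sq_nonneg _)
    have hsa := hsqgen a haabs
    have hsb := hsqgen b hbabs
    -- expand exponentials
    have key1 : Real.exp (h q) = Real.exp (h (q + w)) * Real.exp a := by
      rw [← Real.exp_add, hadef]; ring_nf
    have key2 : Real.exp (h (q + v)) = Real.exp (h (q + w)) * Real.exp b := by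
      rw [← Real.exp_add, hbdef]; ring_nf
    rw [key1, key2]
    have expand : (Real.exp (h (q + w)) * Real.exp a + Real.exp (h (q + w)) * Real.exp b) / 2
        - Real.exp (h (q + w))
        = Real.exp (h (q + w))
          * (((Real.exp a - 1 - a) + (Real.exp b - 1 - b)) / 2 + (a + b) / 2) := by ring
    rw [expand, abs_mul, Real.abs_exp]
    have hinner : |((Real.exp a - 1 - a) + (Real.exp b - 1 - b)) / 2 + (a + b) / 2|
        ≤ ((B₂ + H) ^ 2 + H) * |ε| ^ (1 + α) := by
      have h1 : |((Real.exp a - 1 - a) + (Real.exp b - 1 - b)) / 2 + (a + b) / 2|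
          ≤ (|Real.exp a - 1 - a| + |Real.exp b - 1 - b|) / 2 + |a + b| / 2 := by
        calc |((Real.exp a - 1 - a) + (Real.exp b - 1 - b)) / 2 + (a + b) / 2|
            ≤ |((Real.exp a - 1 - a) + (Real.exp b - 1 - b)) / 2| + |(a + b) / 2| := abs_add_le _ _
          _ ≤ (|Real.exp a - 1 - a| + |Real.exp b - 1 - b|) / 2 + |a + b| / 2 := by
              rw [abs_div, abs_div]
              gcongr
              · exact abs_add_le _ _
              · norm_num
              · norm_num
      have h2 : H * enorm' w ^ (1 + α) ≤ H * |ε| ^ (1 + α) :=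
        mul_le_mul_of_nonneg_left hwpow_le hH.le
      linarith
    calc Real.exp (h (q + w)) * |((Real.exp a - 1 - a) + (Real.exp b - 1 - b)) / 2 + (a + b) / 2|
        ≤ B₁ * (((B₂ + H) ^ 2 + H) * |ε| ^ (1 + α)) := by
          apply mul_le_mul (hhB₁ _ hp) hinner (abs_nonneg _) hB₁.le
      _ = (B₁ * ((B₂ + H) ^ 2 + H)) * |ε| ^ (1 + α) := by ring
      _ ≤ (2 * B₁ / δ ^ (1 + α) + B₁ * ((B₂ + H) ^ 2 + H)) * |ε| ^ (1 + α) := by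
          have h0 : (0:ℝ) ≤ 2 * B₁ / δ ^ (1 + α) := by positivity
          apply mul_le_mul_of_nonneg_right _ hεpow
          linarith
  · -- large increment case
    have e1 := hhB₁ q hq
    have e2 := hhB₁ _ hqv
    have e3 := hhB₁ _ hp
    have hb2 : |(Real.exp (h q) + Real.exp (h (q + v))) / 2 - Real.exp (h (q + w))| ≤ 2 * B₁ := by
      rw [abs_le]
      constructor <;>
        linarith [Real.exp_pos (h q), Real.exp_pos (h (q + v)), Real.exp_pos (h (q + w))]
    have hpowle : δ ^ (1 + α) ≤ |ε| ^ (1 + α) := Real.rpow_le_rpow hδ0.le hbig.le h1α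
    have hkey : 2 * B₁ ≤ (2 * B₁ / δ ^ (1 + α)) * |ε| ^ (1 + α) := by
      have h2 : (0:ℝ) ≤ 2 * B₁ / δ ^ (1 + α) := by positivity
      calc 2 * B₁ = (2 * B₁ / δ ^ (1 + α)) * δ ^ (1 + α) := by field_simp
        _ ≤ (2 * B₁ / δ ^ (1 + α)) * |ε| ^ (1 + α) := mul_le_mul_of_nonneg_left hpowle h2
    have h3 : (0:ℝ) ≤ B₁ * ((B₂ + H) ^ 2 + H) * |ε| ^ (1 + α) := by positivity
    calc |(Real.exp (h q) + Real.exp (h (q + v))) / 2 - Real.exp (h (q + w))|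
        ≤ 2 * B₁ := hb2
      _ ≤ (2 * B₁ / δ ^ (1 + α) + B₁ * ((B₂ + H) ^ 2 + H)) * |ε| ^ (1 + α) := by
          rw [add_mul]; linarith
end
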